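/- Entry description of ρ_m: let E be a finite set, σ a permutation of E, m : E → {0,1} with exactly one value 1 on each cycle of σ, ς_m the E×E matrix with (e',e)-entry 1 if e' = σ(e) and m(e) = 0 and 0 otherwise, and ρ_m := (I − ς_m)^{-1}. Then for all e, e' ∈ E the (e',e)-entry of ρ_m equals 1 if there exists k ≥ 0 with e' = σ^k(e) and m(σ^j(e)) = 0 for all 0 ≤ j < k, and equals 0 otherwise; in particular all entries of ρ_m lie in {0,1}. -/

import Mathlib

open Finset Matrix
open scoped Classical

variable {E : Type*}

/-- The "broken" permutation matrix `ς_m`: the matrix of the permutation `σ`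
(with `(σ e, e)`-entry `1`) in which every column `e` with `m e = 1` is replaced by zero. -/
def brokenPermMatrix [DecidableEq E] (σ : Equiv.Perm E) (m : E → ℤ) : Matrix E E ℤ :=
  Matrix.of fun e' e => if e' = σ e ∧ m e = 0 then 1 else 0

/-- The matrix `ρ_m = (I - ς_m)⁻¹`. -/
noncomputable def rhoMatrix [Fintype E] [DecidableEq E] (σ : Equiv.Perm E) (m : E → ℤ) :
    Matrix E E ℤ :=
  (1 - brokenPermMatrix σ m)⁻¹

/-- If the whole forward orbit of `e` up to a return time consists of zeros of `m`,
this contradicts the existence of an element with `m = 1` on the cycle of `e`. -/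
lemma rho_aux_cycle [Fintype E] (σ : Equiv.Perm E) (m : E → ℤ)
    (hm : ∀ e, ∃! e', σ.SameCycle e e' ∧ m e' = 1) (e : E) (k : ℕ)
    (hfix : (σ ^ (k + 1)) e = e) (hz : ∀ j ≤ k, m ((σ ^ j) e) = 0) : False := by
  obtain ⟨e'', ⟨hc, hm1⟩, -⟩ := hm e
  obtain ⟨n, -, hn⟩ := hc.exists_pow_eq'
  have hper : ∀ q : ℕ, ((σ ^ (k + 1)) ^ q) e = e := by
    intro q
    induction q with
    | zero => simp
    | succ q ih => rw [pow_succ, Equiv.Perm.mul_apply, hfix, ih]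
  have heq : (σ ^ n) e = (σ ^ (n % (k + 1))) e := by
    conv_lhs => rw [← Nat.mod_add_div n (k + 1)]
    rw [pow_add, Equiv.Perm.mul_apply, pow_mul, hper]
  have : m e'' = 0 := by
    rw [← hn, heq]
    exact hz _ (Nat.le_of_lt_succ (Nat.mod_lt _ (Nat.succ_pos k)))
  omega

/-- Entry description of `ρ_m = (I - ς_m)⁻¹`: its `(e', e)`-entry is `1` exactly when `e'`
can be reached from `e` by iterating `σ` without first passing an element where `m` is `1`,
and is `0` otherwise; in particular all entries of `ρ_m` lie in `{0,1}`. -/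
theorem rhoMatrix_entries [Fintype E] [DecidableEq E]
    (σ : Equiv.Perm E) (m : E → ℤ)
    (hm01 : ∀ e, m e = 0 ∨ m e = 1)
    (hm : ∀ e, ∃! e', σ.SameCycle e e' ∧ m e' = 1) :
    (∀ e e' : E, rhoMatrix σ m e' e =
      if ∃ k : ℕ, e' = (σ ^ k) e ∧ ∀ j < k, m ((σ ^ j) e) = 0 then 1 else 0) ∧
    (∀ e e' : E, rhoMatrix σ m e' e = 0 ∨ rhoMatrix σ m e' e = 1) := by
  set P : E → E → Prop := fun e' e => ∃ k : ℕ, e' = (σ ^ k) e ∧ ∀ j < k, m ((σ ^ j) e) = 0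
    with hP
  set R : Matrix E E ℤ := Matrix.of fun e' e => if P e' e then 1 else 0 with hR
  have hsum : ∀ e e' : E, (brokenPermMatrix σ m * R) e' e =
      if m (σ.symm e') = 0 then R (σ.symm e') e else 0 := by
    intro e e'
    rw [Matrix.mul_apply, Finset.sum_eq_single (σ.symm e')]
    · by_cases h : m (σ.symm e') = 0 <;> simp [brokenPermMatrix, h]
    · intro x _ hx
      have : e' ≠ σ x := fun h => hx (by simp [h])
      simp [brokenPermMatrix, this]
    · simp
  have hinv : (1 - brokenPermMatrix σ m) * R = 1 := by
    ext e' e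
    rw [sub_mul, one_mul, Matrix.sub_apply, hsum e e', Matrix.one_apply]
    by_cases he : e' = e
    · subst he
      have hRee : R e' e' = 1 := by
        simp only [hR, Matrix.of_apply, if_pos (⟨0, by simp, by omega⟩ : P e' e')]
        exact if_pos (⟨0, by simp, by omega⟩ : P e' e')
      rw [hRee, if_pos rfl]
      by_cases hme : m (σ.symm e') = 0
      · rw [if_pos hme]
        have : R (σ.symm e') e' = 0 := by
          simp only [hR, Matrix.of_apply, ite_eq_right_iff]
          rintro ⟨k, hk, hz⟩
          exfalso
          refine rho_aux_cycle σ m hm e' k ?_ ?_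
          · rw [pow_succ', Equiv.Perm.mul_apply, ← hk]; simp
          · intro j hj
            rcases Nat.lt_or_ge j k with h | h
            · exact hz j h
            · have : j = k := le_antisymm hj h
              rw [this, ← hk]; exact hme
        rw [this, sub_zero]
      · rw [if_neg hme, sub_zero]
    · rw [if_neg he]
      by_cases hPe : P e' e
      · obtain ⟨k, hk, hz⟩ := hPe
        have hk0 : k ≠ 0 := by rintro rfl; exact he (by simpa using hk)
        obtain ⟨k', rfl⟩ := Nat.exists_eq_succ_of_ne_zero hk0
        have hsymm : σ.symm e' = (σ ^ k') e := by
          rw [hk, pow_succ', Equiv.Perm.mul_apply]; simp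
        have hme : m (σ.symm e') = 0 := by rw [hsymm]; exact hz k' (Nat.lt_succ_self k')
        have h1 : R e' e = 1 := by
          simp only [hR, Matrix.of_apply,
            if_pos (⟨k' + 1, hk, hz⟩ : P e' e)]
          exact if_pos (⟨k' + 1, hk, hz⟩ : P e' e)
        have h2 : R (σ.symm e') e = 1 := by
          simp only [hR, Matrix.of_apply,
            if_pos (⟨k', hsymm, fun j hj => hz j (hj.trans (Nat.lt_succ_self k'))⟩ :
              P (σ.symm e') e)]
          exact if_pos (⟨k', hsymm, fun j hj => hz j (hj.trans (Nat.lt_succ_self k'))⟩ :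
              P (σ.symm e') e)
        rw [h1, if_pos hme, h2, sub_self]
      · have h1 : R e' e = 0 := by simp only [hR, Matrix.of_apply, if_neg hPe]
        rw [h1]
        by_cases hme : m (σ.symm e') = 0
        · rw [if_pos hme]
          have : R (σ.symm e') e = 0 := by
            simp only [hR, Matrix.of_apply, ite_eq_right_iff]
            rintro ⟨k, hk, hz⟩
            exfalso
            apply hPe
            refine ⟨k + 1, ?_, ?_⟩
            · have : σ (σ.symm e') = (σ ^ (k + 1)) e := by
                rw [hk, pow_succ']; rfl
              simpa using this
            · intro j hj
              rcases Nat.lt_or_ge j k with h | h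
              · exact hz j h
              · have : j = k := le_antisymm (Nat.le_of_lt_succ hj) h
                rw [this, ← hk]; exact hme
          rw [this, sub_zero]
        · rw [if_neg hme, sub_zero]
  have hrho : rhoMatrix σ m = R := Matrix.inv_eq_right_inv hinv
  constructor
  · intro e e'
    rw [hrho]; rfl
  · intro e e'
    rw [hrho]
    by_cases h : P e' e
    · right; simp [hR, h]
    · left; simp [hR, h]
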